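/- Consider the Interaction 2 guiding system F : {(Σ,Ω) : Σ² ≠ 1} → ℝ², F(Σ,Ω) = ((3/2)·Σ·(−γ(Σ²+Ω²−1)+2Σ²+Ω²−2), (1/2)·Ω·(Γ̄·(Σ²+Ω²−1)/(Σ²−1) − 3γ(Σ²+Ω²−1) + 6Σ² + 3Ω² − 3)), with parameters γ ∈ [0,2] and Γ̄ ∈ ℝ. Then (0,1) is an equilibrium point, the Jacobian matrix of F at (0,1) is the diagonal matrix with diagonal entries −3/2 and 3 − 3γ − Γ̄, and both entries are negative if and only if Γ̄ > −3(γ−1) (so (0,1) is a hyperbolic sink exactly for Γ̄ > −3(γ−1)). -/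

import Mathlib

set_option maxHeartbeats 1000000 in
/-- Interaction 2 guiding system: `(0,1)` is an equilibrium, its Jacobian is
`diag(−3/2, 3−3γ−Γ̄)`, and both eigenvalues are negative iff `Γ̄ > −3(γ−1)`
(hyperbolic sink exactly then). -/
theorem interaction2_scalar_field_point_stability
    (γ Γ : ℝ) (hγ0 : 0 ≤ γ) (hγ2 : γ ≤ 2)
    (F : ℝ × ℝ → ℝ × ℝ)
    (hF : ∀ p : ℝ × ℝ, F p =
      ((3 / 2) * p.1 * (-γ * (p.1 ^ 2 + p.2 ^ 2 - 1) + 2 * p.1 ^ 2 + p.2 ^ 2 - 2),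
       (1 / 2) * p.2 * (Γ * (p.1 ^ 2 + p.2 ^ 2 - 1) / (p.1 ^ 2 - 1)
         - 3 * γ * (p.1 ^ 2 + p.2 ^ 2 - 1) + 6 * p.1 ^ 2 + 3 * p.2 ^ 2 - 3))) :
    F (0, 1) = (0, 0) ∧
    HasFDerivAt F
      (((-3 / 2 : ℝ) • ContinuousLinearMap.id ℝ ℝ).prodMap
        ((3 - 3 * γ - Γ) • ContinuousLinearMap.id ℝ ℝ)) (0, 1) ∧
    (((-3 / 2 : ℝ) < 0 ∧ 3 - 3 * γ - Γ < 0) ↔ Γ > -3 * (γ - 1)) := by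
  have hFeq : F = fun p : ℝ × ℝ =>
      ((3 / 2) * p.1 * (-γ * (p.1 ^ 2 + p.2 ^ 2 - 1) + 2 * p.1 ^ 2 + p.2 ^ 2 - 2),
       (1 / 2) * p.2 * (Γ * (p.1 ^ 2 + p.2 ^ 2 - 1) / (p.1 ^ 2 - 1)
         - 3 * γ * (p.1 ^ 2 + p.2 ^ 2 - 1) + 6 * p.1 ^ 2 + 3 * p.2 ^ 2 - 3)) :=
    funext hF
  refine ⟨by rw [hF]; norm_num, ?_, ?_⟩
  · rw [hFeq]
    simp only [pow_two, div_eq_mul_inv]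
    have hx : HasFDerivAt (fun p : ℝ × ℝ => p.1)
        (ContinuousLinearMap.fst ℝ ℝ ℝ) ((0, 1) : ℝ × ℝ) := hasFDerivAt_fst
    have hy : HasFDerivAt (fun p : ℝ × ℝ => p.2)
        (ContinuousLinearMap.snd ℝ ℝ ℝ) ((0, 1) : ℝ × ℝ) := hasFDerivAt_snd
    have hx2 := hx.mul hx
    have hy2 := hy.mul hy
    have hs := (hx2.add hy2).sub_const 1
    -- first component
    have h1a := (hx.const_mul (3/2 : ℝ)).mul
      ((((hs.const_mul (-γ)).add (hx2.const_mul 2)).add hy2).sub_const 2)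
    -- second component
    have hden := hx2.sub_const 1
    have hnum := hs.const_mul Γ
    have h0 : (((0:ℝ), (1:ℝ)) : ℝ × ℝ).1 * (((0:ℝ), (1:ℝ)) : ℝ × ℝ).1 - 1 ≠ 0 := by
      norm_num
    have hinv := (hasFDerivAt_inv' h0).comp (((0:ℝ), (1:ℝ)) : ℝ × ℝ) hden
    simp only [Function.comp_def] at hinv
    have hdiv := hnum.mul hinv
    have h2a := (hy.const_mul (1/2 : ℝ)).mul
      ((((hdiv.sub (hs.const_mul (3*γ))).add (hx2.const_mul 6)).add
        (hy2.const_mul 3)).sub_const 3)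
    have h := HasFDerivAt.prodMk h1a h2a
    refine h.congr_fderiv ?_
    refine ContinuousLinearMap.ext fun v => Prod.ext ?_ ?_ <;>
      simp [ContinuousLinearMap.prodMap, ContinuousLinearMap.smul_apply,
        ContinuousLinearMap.prod_apply, ContinuousLinearMap.comp_apply,
        ContinuousLinearMap.mulLeftRight_apply] <;> ring
  · constructor
    · rintro ⟨-, h⟩; linarith
    · intro h; exact ⟨by norm_num, by linarith⟩
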